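/- Let Γ be a discrete group and suppose that ‖a‖_u = ‖a‖_f for all a in the real group ring ℝ[Γ], where ‖·‖_f denotes the norm coming from the direct sum of all finite-dimensional unitary representations. Then ‖a‖_u = ‖a‖_f for all a ∈ ℂ[Γ]. -/

import Mathlib

open scoped ENNReal

/-- A unitary representation of a group `G` on a complex Hilbert space. -/
structure UnitaryRep (G : Type) [Group G] : Type 1 where
  H : Type
  [nacg : NormedAddCommGroup H]
  [ips : InnerProductSpace ℂ H]
  [cs : CompleteSpace H]
  π : G →* (H →L[ℂ] H)
  unitary : ∀ g, π g ∈ unitary (H →L[ℂ] H)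

attribute [instance] UnitaryRep.nacg UnitaryRep.ips UnitaryRep.cs

/-- The induced algebra homomorphism `ℂ[G] → B(H)` of a unitary representation. -/
noncomputable def UnitaryRep.lift {G : Type} [Group G] (r : UnitaryRep G) :
    MonoidAlgebra ℂ G →ₐ[ℂ] (r.H →L[ℂ] r.H) :=
  MonoidAlgebra.lift ℂ (r.H →L[ℂ] r.H) G r.π

/-- The universal C*-norm on the group algebra `ℂ[G]`:
the supremum of `‖π(a)‖` over all unitary representations `π`. -/
noncomputable def univNorm {G : Type} [Group G] (a : MonoidAlgebra ℂ G) : ℝ :=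
  sSup { x | ∃ r : UnitaryRep G, x = ‖r.lift a‖ }

/-- The norm coming from the direct sum of all finite-dimensional unitary
representations: the supremum of `‖π(a)‖` over all finite-dimensional `π`. -/
noncomputable def finNorm {G : Type} [Group G] (a : MonoidAlgebra ℂ G) : ℝ :=
  sSup { x | ∃ r : UnitaryRep G, FiniteDimensional ℂ r.H ∧ x = ‖r.lift a‖ }

noncomputable section Aux

open ContinuousLinearMap

variable {G : Type} [Group G]

/-! ### Basic facts about unitary representations -/

lemma UnitaryRep.star_pi (r : UnitaryRep G) (g : G) : star (r.π g) = r.π g⁻¹ := by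
  have h := (Unitary.mem_iff.mp (r.unitary g)).1
  have h2 : r.π g * r.π g⁻¹ = 1 := by
    rw [← map_mul, mul_inv_cancel, map_one]
  calc star (r.π g) = star (r.π g) * (r.π g * r.π g⁻¹) := by rw [h2, mul_one]
    _ = (star (r.π g) * r.π g) * r.π g⁻¹ := by rw [mul_assoc]
    _ = r.π g⁻¹ := by rw [h, one_mul]

lemma UnitaryRep.norm_pi_le_one (r : UnitaryRep G) (g : G) : ‖r.π g‖ ≤ 1 := by
  have h := (Unitary.mem_iff.mp (r.unitary g)).1
  have h1 : ‖star (r.π g) * r.π g‖ = ‖r.π g‖ * ‖r.π g‖ :=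
    CStarRing.norm_star_mul_self
  rw [h] at h1
  have h2 : ‖(1 : r.H →L[ℂ] r.H)‖ ≤ 1 := norm_id_le
  nlinarith [norm_nonneg (r.π g)]

lemma UnitaryRep.lift_apply (r : UnitaryRep G) (a : MonoidAlgebra ℂ G) :
    r.lift a = a.coeff.sum fun g z => z • r.π g :=
  MonoidAlgebra.lift_apply r.π a

lemma UnitaryRep.norm_lift_le (r : UnitaryRep G) (a : MonoidAlgebra ℂ G) :
    ‖r.lift a‖ ≤ ∑ g ∈ a.coeff.support, ‖a.coeff g‖ := by
  rw [r.lift_apply]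
  refine le_trans (norm_sum_le _ _) (Finset.sum_le_sum fun g _ => ?_)
  rw [norm_smul]
  calc ‖a.coeff g‖ * ‖r.π g‖ ≤ ‖a.coeff g‖ * 1 :=
        mul_le_mul_of_nonneg_left (r.norm_pi_le_one g) (norm_nonneg _)
    _ = ‖a.coeff g‖ := mul_one _

/-- The trivial one-dimensional representation. -/
def UnitaryRep.trivial (G : Type) [Group G] : UnitaryRep G where
  H := ℂ
  π := { toFun := fun _ => 1, map_one' := rfl, map_mul' := fun _ _ => (one_mul 1).symm }
  unitary := fun _ => one_mem _

instance : FiniteDimensional ℂ (UnitaryRep.trivial G).H := by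
  change FiniteDimensional ℂ ℂ
  infer_instance

/-! ### Basic properties of the two norms -/

lemma univSet_nonempty (a : MonoidAlgebra ℂ G) :
    { x | ∃ r : UnitaryRep G, x = ‖r.lift a‖ }.Nonempty :=
  ⟨_, UnitaryRep.trivial G, rfl⟩

lemma univSet_bddAbove (a : MonoidAlgebra ℂ G) :
    BddAbove { x | ∃ r : UnitaryRep G, x = ‖r.lift a‖ } := by
  refine ⟨∑ g ∈ a.coeff.support, ‖a.coeff g‖, fun x hx => ?_⟩
  obtain ⟨r, rfl⟩ := hx
  exact r.norm_lift_le a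

lemma finSet_nonempty (a : MonoidAlgebra ℂ G) :
    { x | ∃ r : UnitaryRep G, FiniteDimensional ℂ r.H ∧ x = ‖r.lift a‖ }.Nonempty :=
  ⟨_, UnitaryRep.trivial G, inferInstance, rfl⟩

lemma finSet_bddAbove (a : MonoidAlgebra ℂ G) :
    BddAbove { x | ∃ r : UnitaryRep G, FiniteDimensional ℂ r.H ∧ x = ‖r.lift a‖ } := by
  refine ⟨∑ g ∈ a.coeff.support, ‖a.coeff g‖, fun x hx => ?_⟩
  obtain ⟨r, _, rfl⟩ := hx
  exact r.norm_lift_le a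

lemma norm_lift_le_univNorm (r : UnitaryRep G) (a : MonoidAlgebra ℂ G) :
    ‖r.lift a‖ ≤ univNorm a :=
  le_csSup (univSet_bddAbove a) ⟨r, rfl⟩

lemma norm_lift_le_finNorm (r : UnitaryRep G) [h : FiniteDimensional ℂ r.H]
    (a : MonoidAlgebra ℂ G) : ‖r.lift a‖ ≤ finNorm a :=
  le_csSup (finSet_bddAbove a) ⟨r, h, rfl⟩

lemma univNorm_le {a : MonoidAlgebra ℂ G} {c : ℝ}
    (h : ∀ r : UnitaryRep G, ‖r.lift a‖ ≤ c) : univNorm a ≤ c := by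
  refine csSup_le (univSet_nonempty a) fun x hx => ?_
  obtain ⟨r, rfl⟩ := hx; exact h r

lemma finNorm_le {a : MonoidAlgebra ℂ G} {c : ℝ}
    (h : ∀ r : UnitaryRep G, FiniteDimensional ℂ r.H → ‖r.lift a‖ ≤ c) : finNorm a ≤ c := by
  refine csSup_le (finSet_nonempty a) fun x hx => ?_
  obtain ⟨r, hr, rfl⟩ := hx; exact h r hr

lemma finNorm_nonneg (a : MonoidAlgebra ℂ G) : 0 ≤ finNorm a :=
  le_trans (norm_nonneg _) (norm_lift_le_finNorm (UnitaryRep.trivial G) a)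

lemma finNorm_le_univNorm (a : MonoidAlgebra ℂ G) : finNorm a ≤ univNorm a :=
  finNorm_le fun r _ => norm_lift_le_univNorm r a

lemma univNorm_add_le (a b : MonoidAlgebra ℂ G) :
    univNorm (a + b) ≤ univNorm a + univNorm b :=
  univNorm_le fun r => by
    rw [map_add]
    exact le_trans (norm_add_le _ _)
      (add_le_add (norm_lift_le_univNorm r a) (norm_lift_le_univNorm r b))

lemma finNorm_add_le (a b : MonoidAlgebra ℂ G) :
    finNorm (a + b) ≤ finNorm a + finNorm b :=
  finNorm_le fun r hr => by
    have := hr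
    rw [map_add]
    exact le_trans (norm_add_le _ _)
      (add_le_add (norm_lift_le_finNorm r a) (norm_lift_le_finNorm r b))

lemma finNorm_sub_le (a b : MonoidAlgebra ℂ G) :
    finNorm (a - b) ≤ finNorm a + finNorm b :=
  finNorm_le fun r hr => by
    have := hr
    rw [map_sub]
    exact le_trans (norm_sub_le _ _)
      (add_le_add (norm_lift_le_finNorm r a) (norm_lift_le_finNorm r b))

lemma univNorm_smul_le (z : ℂ) (a : MonoidAlgebra ℂ G) :
    univNorm (z • a) ≤ ‖z‖ * univNorm a :=
  univNorm_le fun r => by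
    rw [map_smul, norm_smul]
    exact mul_le_mul_of_nonneg_left (norm_lift_le_univNorm r a) (norm_nonneg z)

lemma finNorm_smul_le (z : ℂ) (a : MonoidAlgebra ℂ G) :
    finNorm (z • a) ≤ ‖z‖ * finNorm a :=
  finNorm_le fun r hr => by
    have := hr
    rw [map_smul, norm_smul]
    exact mul_le_mul_of_nonneg_left (norm_lift_le_finNorm r a) (norm_nonneg z)

/-! ### The conjugate Hilbert space -/

/-- The conjugate of a complex Hilbert space: same underlying additive group,
scalar multiplication twisted by complex conjugation. -/
def ConjSpace (H : Type) : Type := H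

/-- The identity map `H → ConjSpace H`. -/
def ConjSpace.of {H : Type} (v : H) : ConjSpace H := v

/-- The identity map `ConjSpace H → H`. -/
def ConjSpace.un {H : Type} (v : ConjSpace H) : H := v

@[simp] lemma ConjSpace.un_of {H : Type} (v : H) : (ConjSpace.of v).un = v := rfl
@[simp] lemma ConjSpace.of_un {H : Type} (v : ConjSpace H) : ConjSpace.of v.un = v := rfl

variable {H : Type}

instance [NormedAddCommGroup H] : NormedAddCommGroup (ConjSpace H) := ‹_›

instance [NormedAddCommGroup H] [CompleteSpace H] : CompleteSpace (ConjSpace H) := ‹_›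

lemma ConjSpace.un_add [NormedAddCommGroup H] (x y : ConjSpace H) :
    (x + y).un = x.un + y.un := rfl

lemma ConjSpace.norm_un [NormedAddCommGroup H] (x : ConjSpace H) : ‖x.un‖ = ‖x‖ := rfl

instance [NormedAddCommGroup H] [Module ℂ H] : SMul ℂ (ConjSpace H) :=
  ⟨fun z v => ConjSpace.of ((starRingEnd ℂ z) • v.un)⟩

lemma conj_smul_def [NormedAddCommGroup H] [Module ℂ H] (z : ℂ) (v : ConjSpace H) :
    z • v = ConjSpace.of ((starRingEnd ℂ z) • v.un) := rfl

lemma ConjSpace.un_smul [NormedAddCommGroup H] [Module ℂ H] (z : ℂ) (v : ConjSpace H) :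
    (z • v).un = (starRingEnd ℂ z) • v.un := rfl

instance [NormedAddCommGroup H] [Module ℂ H] : Module ℂ (ConjSpace H) where
  one_smul v := by rw [conj_smul_def, map_one, one_smul, ConjSpace.of_un]
  mul_smul z w v := by
    rw [conj_smul_def, conj_smul_def, conj_smul_def, ConjSpace.un_of, map_mul, mul_smul]
  smul_zero z := by
    rw [conj_smul_def]
    show ConjSpace.of ((starRingEnd ℂ z) • (0 : H)) = ConjSpace.of 0
    rw [smul_zero]
  smul_add z x y := by
    rw [conj_smul_def, conj_smul_def, conj_smul_def]
    show ConjSpace.of ((starRingEnd ℂ z) • (x.un + y.un)) = _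
    rw [smul_add]
    rfl
  add_smul z w v := by
    rw [conj_smul_def, conj_smul_def, conj_smul_def, map_add, add_smul]
    rfl
  zero_smul v := by
    rw [conj_smul_def, map_zero, zero_smul]
    rfl

instance [NormedAddCommGroup H] [NormedSpace ℂ H] : NormedSpace ℂ (ConjSpace H) where
  norm_smul_le z v := by
    rw [← ConjSpace.norm_un, ConjSpace.un_smul, ← ConjSpace.norm_un v]
    calc ‖(starRingEnd ℂ z) • v.un‖ ≤ ‖starRingEnd ℂ z‖ * ‖v.un‖ := norm_smul_le _ _
      _ = ‖z‖ * ‖v.un‖ := by rw [RCLike.norm_conj]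

instance [NormedAddCommGroup H] [InnerProductSpace ℂ H] : Inner ℂ (ConjSpace H) :=
  ⟨fun x y => inner ℂ y.un x.un⟩

lemma conj_inner_def [NormedAddCommGroup H] [InnerProductSpace ℂ H] (x y : ConjSpace H) :
    (inner ℂ x y : ℂ) = inner ℂ y.un x.un := rfl

instance [NormedAddCommGroup H] [InnerProductSpace ℂ H] :
    InnerProductSpace ℂ (ConjSpace H) where
  norm_sq_eq_re_inner x := by
    rw [conj_inner_def, ← ConjSpace.norm_un]
    exact (inner_self_eq_norm_sq (𝕜 := ℂ) x.un).symm
  conj_inner_symm x y := by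
    rw [conj_inner_def, conj_inner_def, inner_conj_symm]
  add_left x y z := by
    rw [conj_inner_def, conj_inner_def, conj_inner_def, ConjSpace.un_add, inner_add_right]
  smul_left x y z := by
    rw [conj_inner_def, conj_inner_def, ConjSpace.un_smul, inner_smul_right]

variable [NormedAddCommGroup H] [InnerProductSpace ℂ H]

/-- Any (complex-linear) continuous linear map, viewed as a map of the conjugate
spaces, is again complex-linear. -/
def conjCLM (T : H →L[ℂ] H) : ConjSpace H →L[ℂ] ConjSpace H where
  toFun v := ConjSpace.of (T v.un)
  map_add' x y := by
    show ConjSpace.of (T (x.un + y.un)) = ConjSpace.of (T x.un + T y.un)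
    rw [map_add]
  map_smul' z v := by
    show ConjSpace.of (T ((starRingEnd ℂ z) • v.un)) = _
    rw [map_smul]
    rfl
  cont := by
    have : Continuous fun v : ConjSpace H => ConjSpace.of (T v.un) := T.cont
    exact this

@[simp] lemma conjCLM_apply (T : H →L[ℂ] H) (v : ConjSpace H) :
    conjCLM T v = ConjSpace.of (T v.un) := rfl

lemma conjCLM_one : conjCLM (1 : H →L[ℂ] H) = 1 := by
  ext v; rfl

lemma conjCLM_mul (T S : H →L[ℂ] H) : conjCLM (T * S) = conjCLM T * conjCLM S := by
  ext v; rfl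

lemma conjCLM_add (T S : H →L[ℂ] H) : conjCLM (T + S) = conjCLM T + conjCLM S := by
  ext v; rfl

lemma conjCLM_smul (z : ℂ) (T : H →L[ℂ] H) :
    conjCLM (z • T) = (starRingEnd ℂ z) • conjCLM T := by
  ext v
  show ConjSpace.of ((z • T) v.un) = (starRingEnd ℂ z) • ConjSpace.of (T v.un)
  rw [conj_smul_def, ConjSpace.un_of, Complex.conj_conj]
  rfl

lemma norm_conjCLM (T : H →L[ℂ] H) : ‖conjCLM T‖ = ‖T‖ := by
  refine le_antisymm ?_ ?_
  · refine ContinuousLinearMap.opNorm_le_bound _ (norm_nonneg T) fun v => ?_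
    calc ‖conjCLM T v‖ = ‖T v.un‖ := rfl
      _ ≤ ‖T‖ * ‖v.un‖ := T.le_opNorm v.un
      _ = ‖T‖ * ‖v‖ := rfl
  · refine ContinuousLinearMap.opNorm_le_bound _ (norm_nonneg (conjCLM T)) fun v => ?_
    calc ‖T v‖ = ‖conjCLM T (ConjSpace.of v)‖ := rfl
      _ ≤ ‖conjCLM T‖ * ‖ConjSpace.of v‖ := (conjCLM T).le_opNorm _
      _ = ‖conjCLM T‖ * ‖v‖ := rfl

lemma conjCLM_adjoint [CompleteSpace H] (T : H →L[ℂ] H) :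
    conjCLM (ContinuousLinearMap.adjoint T) = ContinuousLinearMap.adjoint (conjCLM T) := by
  rw [ContinuousLinearMap.eq_adjoint_iff]
  intro x y
  rw [conj_inner_def, conj_inner_def]
  show (inner ℂ y.un (ContinuousLinearMap.adjoint T x.un) : ℂ) = inner ℂ (T y.un) x.un
  rw [ContinuousLinearMap.adjoint_inner_right]

lemma conjCLM_star [CompleteSpace H] (T : H →L[ℂ] H) :
    conjCLM (star T) = star (conjCLM T) := by
  rw [ContinuousLinearMap.star_eq_adjoint, ContinuousLinearMap.star_eq_adjoint]
  exact conjCLM_adjoint T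

/-- The conjugate of a finite-dimensional space is finite-dimensional. -/
lemma conjSpace_finiteDimensional [FiniteDimensional ℂ H] :
    FiniteDimensional ℂ (ConjSpace H) := by
  obtain ⟨S, hS⟩ := (Module.finite_def.mp ‹FiniteDimensional ℂ H›)
  let S' : Finset (ConjSpace H) := S
  refine Module.finite_def.mpr ⟨S', ?_⟩
  set p : Submodule ℂ (ConjSpace H) := Submodule.span ℂ (S' : Set (ConjSpace H)) with hp
  have key : ∀ v : ConjSpace H, v ∈ p := by
    set q : Submodule ℂ H :=
      { carrier := (p : Set (ConjSpace H))
        add_mem' := fun hx hy => p.add_mem hx hy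
        zero_mem' := p.zero_mem
        smul_mem' := by
          intro z v hv
          have : (z • v : H) = (((starRingEnd ℂ z) • (ConjSpace.of v) : ConjSpace H) : H) := by
            rw [conj_smul_def, ConjSpace.un_of, Complex.conj_conj]
            rfl
          show ((z • v : H) : ConjSpace H) ∈ p
          rw [this]
          exact p.smul_mem _ hv } with hq
    have hle : Submodule.span ℂ (S : Set H) ≤ q := by
      apply Submodule.span_le.mpr
      intro v hv
      exact Submodule.subset_span (R := ℂ) (M := ConjSpace H) (s := (S' : Set (ConjSpace H))) hv
    intro v
    have : (v : H) ∈ Submodule.span ℂ (S : Set H) := by rw [hS]; trivial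
    exact hle this
  exact Submodule.eq_top_iff'.mpr key

/-- The conjugate representation. -/
def UnitaryRep.conj (r : UnitaryRep G) : UnitaryRep G where
  H := ConjSpace r.H
  π :=
    { toFun := fun g => conjCLM (r.π g)
      map_one' := by show conjCLM (r.π 1) = 1; rw [map_one, conjCLM_one]
      map_mul' := fun g h => by
        show conjCLM (r.π (g * h)) = conjCLM (r.π g) * conjCLM (r.π h)
        rw [map_mul, conjCLM_mul] }
  unitary := by
    intro g
    rw [Unitary.mem_iff]
    constructor
    · show star (conjCLM (r.π g)) * conjCLM (r.π g) = 1
      rw [← conjCLM_star, ← conjCLM_mul, (Unitary.mem_iff.mp (r.unitary g)).1, conjCLM_one]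
    · show conjCLM (r.π g) * star (conjCLM (r.π g)) = 1
      rw [← conjCLM_star, ← conjCLM_mul, (Unitary.mem_iff.mp (r.unitary g)).2, conjCLM_one]

lemma UnitaryRep.conj_pi (r : UnitaryRep G) (g : G) : r.conj.π g = conjCLM (r.π g) := rfl

/-- The coefficientwise conjugate of an element of the group algebra. -/
def conjA (a : MonoidAlgebra ℂ G) : MonoidAlgebra ℂ G :=
  MonoidAlgebra.ofCoeff (Finsupp.mapRange (starRingEnd ℂ) (map_zero _) a.coeff)

@[simp] lemma conjA_apply (a : MonoidAlgebra ℂ G) (g : G) :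
    (conjA a).coeff g = starRingEnd ℂ (a.coeff g) := rfl

@[simp] lemma conjA_conjA (a : MonoidAlgebra ℂ G) : conjA (conjA a) = a := by
  ext g; simp

lemma conj_lift (r : UnitaryRep G) (a : MonoidAlgebra ℂ G) :
    r.conj.lift (conjA a) = conjCLM (r.lift a) := by
  rw [UnitaryRep.lift_apply, UnitaryRep.lift_apply]
  rw [conjA, MonoidAlgebra.coeff_ofCoeff, Finsupp.sum_mapRange_index (fun g => by simp)]
  calc ((a.coeff.sum fun g z => (starRingEnd ℂ z) • (r.conj.π g)) : ConjSpace r.H →L[ℂ] ConjSpace r.H)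
      = ∑ g ∈ a.coeff.support, conjCLM ((a.coeff g) • r.π g) := by
        simp only [Finsupp.sum]
        refine Finset.sum_congr rfl fun g _ => ?_
        rw [UnitaryRep.conj_pi, conjCLM_smul]
        rfl
    _ = conjCLM (a.coeff.sum fun g z => z • r.π g) := by
        ext v
        rw [ContinuousLinearMap.sum_apply, conjCLM_apply, Finsupp.sum,
          ContinuousLinearMap.sum_apply]
        rfl

lemma norm_conj_lift (r : UnitaryRep G) (a : MonoidAlgebra ℂ G) :
    ‖r.conj.lift (conjA a)‖ = ‖r.lift a‖ := by
  rw [conj_lift]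
  exact norm_conjCLM (r.lift a)

lemma finNorm_conjA_le (a : MonoidAlgebra ℂ G) : finNorm (conjA a) ≤ finNorm a := by
  refine finNorm_le fun r hr => ?_
  have : ‖r.lift (conjA a)‖ = ‖r.conj.lift a‖ := by
    have h := norm_conj_lift r (conjA a)
    rw [conjA_conjA] at h
    rw [← h]
  rw [this]
  have : FiniteDimensional ℂ r.conj.H := by
    have := hr
    exact conjSpace_finiteDimensional (H := r.H)
  exact norm_lift_le_finNorm r.conj a

lemma mAlg_add_apply (a b : MonoidAlgebra ℂ G) (g : G) : (a + b).coeff g = a.coeff g + b.coeff g := rfl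

lemma mAlg_sub_apply (a b : MonoidAlgebra ℂ G) (g : G) : (a - b).coeff g = a.coeff g - b.coeff g := rfl

lemma mAlg_smul_apply (z : ℂ) (a : MonoidAlgebra ℂ G) (g : G) : (z • a).coeff g = z * a.coeff g := rfl

/-! ### The star operation on the group algebra -/

/-- The star (adjoint) on `ℂ[G]`: `(starA a) g = conj (a g⁻¹)`. -/
def starA (a : MonoidAlgebra ℂ G) : MonoidAlgebra ℂ G :=
  MonoidAlgebra.ofCoeff (Finsupp.mapRange (starRingEnd ℂ) (map_zero _)
    (Finsupp.equivMapDomain (Equiv.inv G) a.coeff))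

lemma lift_starA (r : UnitaryRep G) (a : MonoidAlgebra ℂ G) :
    r.lift (starA a) = star (r.lift a) := by
  rw [UnitaryRep.lift_apply, UnitaryRep.lift_apply, starA, MonoidAlgebra.coeff_ofCoeff]
  rw [Finsupp.sum_mapRange_index (fun g => by simp)]
  rw [Finsupp.sum_equivMapDomain]
  rw [Finsupp.sum, Finsupp.sum, star_sum]
  refine Finset.sum_congr rfl fun g _ => ?_
  rw [star_smul, UnitaryRep.star_pi]
  rfl

/-! ### The C*-identity argument -/

lemma norm_lift_sq (r : UnitaryRep G) (a : MonoidAlgebra ℂ G) :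
    ‖r.lift (starA a * a)‖ = ‖r.lift a‖ * ‖r.lift a‖ := by
  rw [map_mul, lift_starA]
  exact CStarRing.norm_star_mul_self

lemma isSelfAdjoint_lift (r : UnitaryRep G) (a : MonoidAlgebra ℂ G) :
    IsSelfAdjoint (r.lift (starA a * a)) := by
  rw [map_mul, lift_starA]
  exact IsSelfAdjoint.star_mul_self _

lemma norm_lift_pow_two_pow (r : UnitaryRep G) (a : MonoidAlgebra ℂ G) (n : ℕ) :
    ‖r.lift ((starA a * a) ^ 2 ^ n)‖ = ‖r.lift (starA a * a)‖ ^ 2 ^ n := by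
  rw [map_pow]
  have h := (isSelfAdjoint_lift r a).nnnorm_pow_two_pow n
  have := congrArg (fun t : NNReal => (t : ℝ)) h
  push_cast at this
  exact this

/-- The key elementary limit argument: if `A ^ 2^(n+1) ≤ 2 * B ^ 2^(n+1)` for all `n`,
then `A ≤ B`. -/
lemma le_of_pow_le_two_mul_pow {A B : ℝ} (hA : 0 ≤ A) (hB : 0 ≤ B)
    (h : ∀ n : ℕ, A ^ 2 ^ (n + 1) ≤ 2 * B ^ 2 ^ (n + 1)) : A ≤ B := by
  by_contra hcon
  push_neg at hcon
  rcases eq_or_lt_of_le hB with hB0 | hB0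
  · have h0 := h 0
    rw [← hB0] at h0
    simp at h0
    have : A = 0 := by nlinarith [h0]
    exact absurd hcon (by rw [this, ← hB0]; exact lt_irrefl 0)
  · set t := A / B with ht
    have ht1 : 1 < t := (one_lt_div hB0).mpr hcon
    have htle : ∀ n : ℕ, t ^ 2 ^ (n + 1) ≤ 2 := by
      intro n
      rw [ht, div_pow, div_le_iff₀ (pow_pos hB0 _)]
      calc A ^ 2 ^ (n + 1) ≤ 2 * B ^ 2 ^ (n + 1) := h n
        _ = 2 * B ^ 2 ^ (n + 1) := rfl
    obtain ⟨m, hm⟩ := pow_unbounded_of_one_lt (2 : ℝ) ht1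
    have hmle : m ≤ 2 ^ (m + 1) := le_of_lt (lt_trans (Nat.lt_two_pow_self (n := m))
      (Nat.pow_lt_pow_right one_lt_two (Nat.lt_succ_self m)))
    have : t ^ m ≤ t ^ 2 ^ (m + 1) := pow_le_pow_right₀ (le_of_lt ht1) hmle
    linarith [htle m]

end Aux

theorem univNorm_eq_finNorm_of_real_case {G : Type} [Group G]
    (hreal : ∀ a : MonoidAlgebra ℂ G, (∀ g : G, (a.coeff g).im = 0) → univNorm a = finNorm a) :
    ∀ a : MonoidAlgebra ℂ G, univNorm a = finNorm a := by
  -- Step 1: `univNorm x ≤ 2 * finNorm x` for every `x`.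
  have key2 : ∀ x : MonoidAlgebra ℂ G, univNorm x ≤ 2 * finNorm x := by
    intro x
    set b : MonoidAlgebra ℂ G := (2⁻¹ : ℂ) • (x + conjA x) with hb
    set c : MonoidAlgebra ℂ G := (-(Complex.I) / 2) • (x - conjA x) with hc
    have hbapp : ∀ g : G, b.coeff g = 2⁻¹ * (x.coeff g + starRingEnd ℂ (x.coeff g)) := by
      intro g
      rw [hb, mAlg_smul_apply, mAlg_add_apply, conjA_apply]
    have hcapp : ∀ g : G, c.coeff g = (-(Complex.I) / 2) * (x.coeff g - starRingEnd ℂ (x.coeff g)) := by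
      intro g
      rw [hc, mAlg_smul_apply, mAlg_sub_apply, conjA_apply]
    have hbreal : ∀ g : G, (b.coeff g).im = 0 := by
      intro g
      rw [hbapp g, Complex.add_conj]
      simp
    have hcreal : ∀ g : G, (c.coeff g).im = 0 := by
      intro g
      rw [hcapp g, Complex.sub_conj]
      simp
    have hx : x = b + Complex.I • c := by
      rw [hb, hc]
      ext g
      simp only [mAlg_add_apply, mAlg_smul_apply, mAlg_sub_apply, conjA_apply]
      linear_combination ((x.coeff g - starRingEnd ℂ (x.coeff g)) / 2) * Complex.I_mul_I
    have hnh : ‖(2⁻¹ : ℂ)‖ = (2⁻¹ : ℝ) := by norm_num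
    have hni : ‖(-(Complex.I) / 2 : ℂ)‖ = (2⁻¹ : ℝ) := by
      rw [norm_div, norm_neg, Complex.norm_I]
      norm_num
    have hfb : finNorm b ≤ finNorm x := by
      calc finNorm b ≤ ‖(2⁻¹ : ℂ)‖ * finNorm (x + conjA x) := finNorm_smul_le _ _
        _ ≤ ‖(2⁻¹ : ℂ)‖ * (finNorm x + finNorm (conjA x)) :=
            mul_le_mul_of_nonneg_left (finNorm_add_le _ _) (norm_nonneg _)
        _ ≤ ‖(2⁻¹ : ℂ)‖ * (finNorm x + finNorm x) :=
            mul_le_mul_of_nonneg_left (by linarith [finNorm_conjA_le x]) (norm_nonneg _)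
        _ = finNorm x := by rw [hnh]; ring
    have hfc : finNorm c ≤ finNorm x := by
      calc finNorm c ≤ ‖(-(Complex.I) / 2 : ℂ)‖ * finNorm (x - conjA x) := finNorm_smul_le _ _
        _ ≤ ‖(-(Complex.I) / 2 : ℂ)‖ * (finNorm x + finNorm (conjA x)) :=
            mul_le_mul_of_nonneg_left (finNorm_sub_le _ _) (norm_nonneg _)
        _ ≤ ‖(-(Complex.I) / 2 : ℂ)‖ * (finNorm x + finNorm x) :=
            mul_le_mul_of_nonneg_left (by linarith [finNorm_conjA_le x]) (norm_nonneg _)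
        _ = finNorm x := by rw [hni]; ring
    calc univNorm x = univNorm (b + Complex.I • c) := by rw [← hx]
      _ ≤ univNorm b + univNorm (Complex.I • c) := univNorm_add_le _ _
      _ ≤ univNorm b + ‖Complex.I‖ * univNorm c := by
          linarith [univNorm_smul_le Complex.I c]
      _ = univNorm b + univNorm c := by rw [Complex.norm_I, one_mul]
      _ = finNorm b + finNorm c := by rw [hreal b hbreal, hreal c hcreal]
      _ ≤ 2 * finNorm x := by linarith
  -- Step 2: upgrade to `univNorm x ≤ finNorm x` via the C*-identity.
  intro a
  refine le_antisymm ?_ (finNorm_le_univNorm a)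
  refine univNorm_le fun r => ?_
  refine le_of_pow_le_two_mul_pow (norm_nonneg _) (finNorm_nonneg a) fun n => ?_
  have hpow : ‖r.lift a‖ ^ 2 ^ (n + 1) = ‖r.lift ((starA a * a) ^ 2 ^ n)‖ := by
    rw [norm_lift_pow_two_pow, norm_lift_sq]
    rw [pow_succ, pow_mul]
    ring
  have hfin : finNorm ((starA a * a) ^ 2 ^ n) ≤ finNorm a ^ 2 ^ (n + 1) := by
    refine finNorm_le fun s hs => ?_
    have := hs
    have h1 : ‖s.lift ((starA a * a) ^ 2 ^ n)‖ = ‖s.lift a‖ ^ 2 ^ (n + 1) := by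
      rw [norm_lift_pow_two_pow, norm_lift_sq, pow_succ, pow_mul]
      ring
    rw [h1]
    exact pow_le_pow_left₀ (norm_nonneg _) (norm_lift_le_finNorm s a) _
  calc ‖r.lift a‖ ^ 2 ^ (n + 1) = ‖r.lift ((starA a * a) ^ 2 ^ n)‖ := hpow
    _ ≤ univNorm ((starA a * a) ^ 2 ^ n) := norm_lift_le_univNorm _ _
    _ ≤ 2 * finNorm ((starA a * a) ^ 2 ^ n) := key2 _
    _ ≤ 2 * finNorm a ^ 2 ^ (n + 1) := by linarith [hfin]
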